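/- Let V be a finite-dimensional complex inner product space, T : V → V a self-adjoint linear operator, and v ∈ V a nonzero vector. Then the function ψ : ℝ → ℝ, ψ(t) = log ‖exp(tT) v‖, is convex. -/

import Mathlib

open NormedSpace RCLike
open scoped InnerProductSpace

/-- **Convexity of the Kempf–Ness function along a one-parameter subgroup.**
For a self-adjoint operator `T` on a finite-dimensional complex inner product
space and a nonzero vector `v`, the function `t ↦ log ‖exp(tT) v‖` is convex. -/
theorem kempfNess_convex (V : Type*) [NormedAddCommGroup V] [InnerProductSpace ℂ V]
    [FiniteDimensional ℂ V] (T : V →L[ℂ] V) (hT : IsSelfAdjoint T)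
    (v : V) (hv : v ≠ 0) :
    ConvexOn ℝ Set.univ (fun t : ℝ => Real.log ‖NormedSpace.exp ((t : ℂ) • T) v‖) := by
  -- self-adjointness as an inner-product identity
  have hadj : ContinuousLinearMap.adjoint T = T := ContinuousLinearMap.isSelfAdjoint_iff'.mp hT
  have hsym : ∀ x y : V, ⟪T x, y⟫_ℂ = ⟪x, T y⟫_ℂ := by
    intro x y
    conv_lhs => rw [← hadj]
    exact ContinuousLinearMap.adjoint_inner_left T y x
  -- work with the real exponential
  have hexp : ∀ t : ℝ, NormedSpace.exp ((t : ℂ) • T) = NormedSpace.exp (t • T) := by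
    intro t
    have hcast : ((t : ℂ) • T) = t • T := by rw [← algebraMap_smul ℂ t T]; rfl
    rw [hcast]
  set u : ℝ → V := fun t => NormedSpace.exp (t • T) v with hu_def
  have hu0 : ∀ t : ℝ, u t ≠ 0 := by
    intro t h
    apply hv
    have h1 : NormedSpace.exp (-(t • T)) * NormedSpace.exp (t • T) = 1 := by
      let +nondep : NormedAlgebra ℚ (V →L[ℂ] V) := .restrictScalars ℚ ℂ (V →L[ℂ] V)
      have h := NormedSpace.exp_add_of_commute (Commute.neg_left (Commute.refl (t • T)))
      rw [neg_add_cancel, NormedSpace.exp_zero] at h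
      exact h.symm
    calc v = (NormedSpace.exp (-(t • T)) * NormedSpace.exp (t • T)) v := by rw [h1]; rfl
      _ = NormedSpace.exp (-(t • T)) (u t) := rfl
      _ = 0 := by rw [h]; simp
  -- derivatives of u
  have hu' : ∀ t : ℝ, HasDerivAt u (T (u t)) t := by
    intro t
    have hE : HasDerivAt (fun s : ℝ => NormedSpace.exp (s • T))
        (T * NormedSpace.exp (t • T)) t := hasDerivAt_exp_smul_const' T t
    have h2 := ((ContinuousLinearMap.apply ℂ V v).restrictScalars
        ℝ).hasFDerivAt.comp_hasDerivAt t hE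
    simpa [hu_def, ContinuousLinearMap.mul_apply, Function.comp_def] using h2
  have hw' : ∀ t : ℝ, HasDerivAt (fun s => T (u s)) (T (T (u t))) t := fun t =>
    (T.restrictScalars ℝ).hasFDerivAt.comp_hasDerivAt t (hu' t)
  -- F = ‖u‖², G = re⟪Tu, u⟫
  set F : ℝ → ℝ := fun t => re ⟪u t, u t⟫_ℂ with hF_def
  set G : ℝ → ℝ := fun t => re ⟪T (u t), u t⟫_ℂ with hG_def
  have hFnorm : ∀ t, F t = ‖u t‖ ^ 2 := fun t => inner_self_eq_norm_sq (𝕜 := ℂ) (u t)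
  have hFpos : ∀ t, 0 < F t := by
    intro t
    rw [hFnorm]
    exact pow_pos (norm_pos_iff.mpr (hu0 t)) 2
  have hF' : ∀ t : ℝ, HasDerivAt F (2 * G t) t := by
    intro t
    have h1 : HasDerivAt (fun s => ⟪u s, u s⟫_ℂ) (⟪u t, T (u t)⟫_ℂ + ⟪T (u t), u t⟫_ℂ) t :=
      (hu' t).inner ℂ (hu' t)
    have h2 := (reCLM (K := ℂ)).hasFDerivAt.comp_hasDerivAt t h1
    have h3 : re (⟪u t, T (u t)⟫_ℂ + ⟪T (u t), u t⟫_ℂ) = 2 * G t := by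
      rw [map_add, inner_re_symm]
      ring
    simpa only [Function.comp_def, reCLM_apply, h3] using h2
  have hG' : ∀ t : ℝ, HasDerivAt G (2 * re ⟪T (u t), T (u t)⟫_ℂ) t := by
    intro t
    have h1 : HasDerivAt (fun s => ⟪T (u s), u s⟫_ℂ)
        (⟪T (u t), T (u t)⟫_ℂ + ⟪T (T (u t)), u t⟫_ℂ) t := (hw' t).inner ℂ (hu' t)
    have h2 := (reCLM (K := ℂ)).hasFDerivAt.comp_hasDerivAt t h1
    have h3 : re (⟪T (u t), T (u t)⟫_ℂ + ⟪T (T (u t)), u t⟫_ℂ)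
        = 2 * re ⟪T (u t), T (u t)⟫_ℂ := by
      rw [map_add, hsym (T (u t)) (u t)]
      ring
    simpa only [Function.comp_def, reCLM_apply, h3] using h2
  -- the function f₀ = log F / 2
  set f₀ : ℝ → ℝ := fun t => Real.log (F t) / 2 with hf₀_def
  have hf₀' : ∀ t : ℝ, HasDerivAt f₀ (G t / F t) t := by
    intro t
    have h1 := ((hF' t).log (hFpos t).ne').div_const 2
    refine h1.congr_deriv ?_
    field_simp
  have hderiv1 : deriv f₀ = fun t => G t / F t := funext fun t => (hf₀' t).deriv
  have hf₁' : ∀ t : ℝ, HasDerivAt (fun t => G t / F t)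
      ((2 * re ⟪T (u t), T (u t)⟫_ℂ * F t - G t * (2 * G t)) / F t ^ 2) t := fun t =>
    (hG' t).div (hF' t) (hFpos t).ne'
  -- convexity of f₀
  have hconv : ConvexOn ℝ Set.univ f₀ := by
    apply convexOn_univ_of_deriv2_nonneg
    · exact fun t => (hf₀' t).differentiableAt
    · rw [hderiv1]; exact fun t => (hf₁' t).differentiableAt
    · intro t
      have h2 : deriv^[2] f₀ t = deriv (deriv f₀) t := rfl
      rw [h2, hderiv1, (hf₁' t).deriv]
      have habs : |G t| ≤ ‖T (u t)‖ * ‖u t‖ := by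
        refine (abs_re_le_norm _).trans ?_
        exact norm_inner_le_norm (𝕜 := ℂ) _ _
      have hsq : G t ^ 2 ≤ re ⟪T (u t), T (u t)⟫_ℂ * F t := by
        have h4 : G t ^ 2 ≤ (‖T (u t)‖ * ‖u t‖) ^ 2 := by
          rw [← sq_abs]
          exact pow_le_pow_left₀ (abs_nonneg _) habs 2
        calc G t ^ 2 ≤ (‖T (u t)‖ * ‖u t‖) ^ 2 := h4
          _ = re ⟪T (u t), T (u t)⟫_ℂ * F t := by
            rw [mul_pow, hFnorm, inner_self_eq_norm_sq (𝕜 := ℂ)]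
      have hFp := hFpos t
      have h5 : 0 ≤ 2 * re ⟪T (u t), T (u t)⟫_ℂ * F t - G t * (2 * G t) := by nlinarith
      exact div_nonneg h5 (sq_nonneg _)
  -- identify the goal function with f₀
  have heq : (fun t : ℝ => Real.log ‖NormedSpace.exp ((t : ℂ) • T) v‖) = f₀ := by
    funext t
    rw [hexp t, hf₀_def]
    show Real.log ‖u t‖ = Real.log (F t) / 2
    rw [hFnorm, Real.log_pow]
    push_cast
    ring
  rw [heq]
  exact hconv
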